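/- Let p be a prime with p ≡ 3 (mod 4) and let d ∈ F_p with d ≠ 0 and d ≠ 1. If the supersingularity condition Σ_{j=0}^{(p−1)/2} binom((p−1)/2, j)² · d^j = 0 holds in F_p, then N_d = p + 1 when χ(d) = −1, and N_d = p − 3 when χ(d) = 1. -/

import Mathlib

open Finset

/-- The number of affine points of the Edwards curve `x² + y² = 1 + d x² y²` over `ZMod p`. -/
noncomputable def edwardsCard (p : ℕ) (d : ZMod p) : ℕ :=
  Nat.card {xy : ZMod p × ZMod p // xy.1 ^ 2 + xy.2 ^ 2 = 1 + d * xy.1 ^ 2 * xy.2 ^ 2}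

section Aux

variable {p : ℕ} [hpp : Fact p.Prime]

/-- Sum of `x^i` over all of `ZMod p`, for `i ≠ 0`. -/
private lemma sum_pow_all (i : ℕ) (hi : i ≠ 0) :
    ∑ x : ZMod p, x ^ i = if (p - 1) ∣ i then (-1 : ZMod p) else 0 := by
  classical
  have h := FiniteField.sum_pow_units (ZMod p) i
  rw [ZMod.card] at h
  rw [← h]
  let φ : (ZMod p)ˣ ↪ ZMod p := ⟨fun x => x, fun _ _ h => Units.ext h⟩
  have hφ : univ.map φ = univ \ {0} := by
    ext x
    constructor
    · intro hx
      obtain ⟨u, -, rfl⟩ := mem_map.mp hx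
      simp only [mem_sdiff, mem_univ, mem_singleton, true_and]
      exact u.ne_zero
    · intro hx
      have hx0 : x ≠ 0 := by simpa using (mem_sdiff.mp hx).2
      exact mem_map.mpr ⟨Units.mk0 x hx0, mem_univ _, rfl⟩
  calc ∑ x : ZMod p, x ^ i = ∑ x ∈ univ \ {0}, x ^ i := by
        refine (Finset.sum_subset (Finset.sdiff_subset) fun x _ hx => ?_).symm
        have : x = 0 := by simpa using hx
        simp [this, zero_pow hi]
    _ = ∑ x ∈ univ.map φ, x ^ i := by rw [hφ]
    _ = ∑ u : (ZMod p)ˣ, (u : ZMod p) ^ i := Finset.sum_map _ _ _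

private lemma Esum (hm1 : 1 ≤ p / 2) (hp2 : p % 2 = 1) {s : ℕ} (hs : s ≤ 2 * (p / 2)) :
    ∑ x : ZMod p, x ^ (2 * s) = if s = p / 2 ∨ s = 2 * (p / 2) then (-1 : ZMod p) else 0 := by
  set m := p / 2 with hm
  have hpm : p = 2 * m + 1 := by omega
  rcases Nat.eq_zero_or_pos s with hs0 | hs0
  · subst hs0
    rw [if_neg (by omega)]
    simp [ZMod.card, CharP.cast_eq_zero]
  · rw [sum_pow_all (2 * s) (by omega)]
    have hdvd : (p - 1) ∣ 2 * s ↔ (s = m ∨ s = 2 * m) := by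
      constructor
      · rintro ⟨k, hk⟩
        have hk1 : 1 ≤ k := by
          rcases Nat.eq_zero_or_pos k with h | h
          · subst h; rw [mul_zero] at hk; omega
          · exact h
        have hk2 : k ≤ 2 := by
          by_contra hc
          push_neg at hc
          have : (p - 1) * 3 ≤ (p - 1) * k := Nat.mul_le_mul_left _ (by omega)
          omega
        interval_cases k <;> omega
      · rintro (rfl | rfl)
        · exact ⟨1, by omega⟩
        · exact ⟨2, by omega⟩
      -- note: nonlinear steps above may need care
    by_cases h : s = m ∨ s = 2 * m
    · rw [if_pos (hdvd.mpr h), if_pos h]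
    · rw [if_neg (fun hd => h (hdvd.mp hd)), if_neg h]

/-- The key character-sum computation using the supersingularity hypothesis. -/
private lemma key_sum (hp2 : p % 2 = 1) (d : ZMod p)
    (hss : ∑ j ∈ range (p / 2 + 1), ((p / 2).choose j : ZMod p) ^ 2 * d ^ j = 0) :
    ∑ x : ZMod p, ((1 - x ^ 2) * (1 - d * x ^ 2)) ^ (p / 2) = -d ^ (p / 2) := by
  classical
  set m := p / 2 with hm
  have hple : 2 ≤ p := hpp.out.two_le
  have hm1 : 1 ≤ m := by omega
  set c : ℕ → ℕ → ZMod p := fun i j => (-1) ^ (i + j) * d ^ j * (m.choose i) * (m.choose j)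
    with hc
  have expand : ∀ x : ZMod p, ((1 - x ^ 2) * (1 - d * x ^ 2)) ^ m =
      ∑ i ∈ range (m + 1), ∑ j ∈ range (m + 1), c i j * x ^ (2 * (i + j)) := by
    intro x
    have h1 : (1 - x ^ 2 : ZMod p) ^ m
        = ∑ i ∈ range (m + 1), (-1) ^ i * (m.choose i : ZMod p) * x ^ (2 * i) := by
      rw [show (1 - x ^ 2 : ZMod p) = -(x ^ 2) + 1 by ring, add_pow]
      refine Finset.sum_congr rfl fun i _ => ?_
      rw [pow_mul, neg_pow]
      ring
    have h2 : (1 - d * x ^ 2 : ZMod p) ^ m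
        = ∑ j ∈ range (m + 1), (-1) ^ j * d ^ j * (m.choose j : ZMod p) * x ^ (2 * j) := by
      rw [show (1 - d * x ^ 2 : ZMod p) = -(d * x ^ 2) + 1 by ring, add_pow]
      refine Finset.sum_congr rfl fun j _ => ?_
      rw [pow_mul, neg_pow, mul_pow]
      ring
    rw [mul_pow, h1, h2, Finset.sum_mul_sum]
    refine Finset.sum_congr rfl fun i _ => Finset.sum_congr rfl fun j _ => ?_
    rw [hc]
    simp only
    rw [pow_add ((-1 : ZMod p)) i j, show 2 * (i + j) = 2 * i + 2 * j by ring, pow_add]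
    ring
  calc ∑ x : ZMod p, ((1 - x ^ 2) * (1 - d * x ^ 2)) ^ m
      = ∑ x : ZMod p, ∑ i ∈ range (m + 1), ∑ j ∈ range (m + 1), c i j * x ^ (2 * (i + j)) :=
        Finset.sum_congr rfl fun x _ => expand x
    _ = ∑ i ∈ range (m + 1), ∑ j ∈ range (m + 1), c i j * ∑ x : ZMod p, x ^ (2 * (i + j)) := by
        rw [Finset.sum_comm]
        refine Finset.sum_congr rfl fun i _ => ?_
        rw [Finset.sum_comm]
        refine Finset.sum_congr rfl fun j _ => ?_
        rw [Finset.mul_sum]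
    _ = ∑ i ∈ range (m + 1), ∑ j ∈ range (m + 1),
          ((if j = m - i then -c i j else 0) + (if i = m ∧ j = m then -c i j else 0)) := by
        refine Finset.sum_congr rfl fun i hi => Finset.sum_congr rfl fun j hj => ?_
        rw [mem_range] at hi hj
        rw [Esum hm1 hp2 (by omega)]
        by_cases h1 : j = m - i
        · by_cases h2 : i = m ∧ j = m
          · exfalso; omega
          · rw [if_pos (Or.inl (by omega)), if_pos h1, if_neg h2, add_zero, mul_neg_one]
        · by_cases h2 : i = m ∧ j = m
          · rw [if_pos (Or.inr (by omega)), if_neg h1, if_pos h2, zero_add, mul_neg_one]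
          · rw [if_neg (by omega), if_neg h1, if_neg h2, add_zero, mul_zero]
    _ = ∑ i ∈ range (m + 1), (-c i (m - i) + if i = m then -c m m else 0) := by
        refine Finset.sum_congr rfl fun i hi => ?_
        rw [mem_range] at hi
        rw [Finset.sum_add_distrib]
        congr 1
        · exact (Finset.sum_ite_eq' (range (m + 1)) (m - i) fun j => -c i j).trans
            (if_pos (mem_range.mpr (by omega)))
        · by_cases hieq : i = m
          · subst hieq
            rw [if_pos rfl]
            simp only [eq_self_iff_true, true_and]
            exact (Finset.sum_ite_eq' (range (m + 1)) m fun j => -c m j).trans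
              (if_pos (mem_range.mpr (by omega)))
          · rw [if_neg hieq]
            exact Finset.sum_eq_zero fun j _ => if_neg (by tauto)
    _ = -d ^ m := by
        rw [Finset.sum_add_distrib]
        have hA : ∑ i ∈ range (m + 1), c i (m - i) = 0 := by
          have h1 : ∀ i ∈ range (m + 1), c i (m - i)
              = (-1 : ZMod p) ^ m * ((m.choose (m - i) : ZMod p) ^ 2 * d ^ (m - i)) := by
            intro i hi
            rw [mem_range] at hi
            have hle : i ≤ m := by omega
            rw [hc]
            simp only
            rw [show i + (m - i) = m by omega, Nat.choose_symm hle]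
            ring
          rw [Finset.sum_congr rfl h1, ← Finset.mul_sum]
          have h2 : ∑ i ∈ range (m + 1),
              ((m.choose (m - i) : ZMod p) ^ 2 * d ^ (m - i)) = 0 := by
            have hrefl := Finset.sum_range_reflect
              (fun k => ((m.choose k : ZMod p) ^ 2 * d ^ k)) (m + 1)
            simp only [Nat.add_sub_cancel] at hrefl
            rw [hrefl]
            exact hss
          rw [h2, mul_zero]
        have hcmm : c m m = d ^ m := by
          rw [hc]
          simp only [Nat.choose_self, Nat.cast_one]
          rw [show m + m = 2 * m by ring, pow_mul]
          norm_num
        have hsumneg : ∑ i ∈ range (m + 1), -c i (m - i) = 0 := by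
          rw [Finset.sum_neg_distrib, hA, neg_zero]
        rw [hsumneg, zero_add,
          (Finset.sum_ite_eq' (range (m + 1)) m fun _ => -c m m).trans
            (if_pos (mem_range.mpr (by omega))), hcmm]

private lemma ringChar_ne_two (hp2 : p ≠ 2) : ringChar (ZMod p) ≠ 2 := by
  rw [ZMod.ringChar_zmod_n]; exact hp2

private lemma sqrt_count (hp2 : p ≠ 2) (a : ZMod p) :
    (Fintype.card {y : ZMod p // y ^ 2 = a} : ℤ) = quadraticChar (ZMod p) a + 1 := by
  classical
  have h := quadraticChar_card_sqrts (ringChar_ne_two hp2) a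
  rw [Set.toFinset_setOf] at h
  rw [Fintype.card_subtype]
  exact_mod_cast h

private lemma quadChar_inv (d : ZMod p) (hd0 : d ≠ 0) :
    quadraticChar (ZMod p) d⁻¹ = quadraticChar (ZMod p) d := by
  have h1 : quadraticChar (ZMod p) d * quadraticChar (ZMod p) d⁻¹ = 1 := by
    rw [← map_mul, mul_inv_cancel₀ hd0, map_one]
  rcases quadraticChar_dichotomy hd0 with h | h <;> rw [h] at h1 ⊢ <;> omega

private lemma count_lemma (hp2 : p ≠ 2) (d : ZMod p) (hd0 : d ≠ 0) (hd1 : d ≠ 1) :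
    (edwardsCard p d : ℤ)
      = p + (∑ x : ZMod p, (quadraticChar (ZMod p) ((1 - x ^ 2) * (1 - d * x ^ 2)) : ℤ))
        - (1 + quadraticChar (ZMod p) d) := by
  classical
  have hcard : edwardsCard p d
      = ∑ x : ZMod p, Fintype.card {y : ZMod p // x ^ 2 + y ^ 2 = 1 + d * x ^ 2 * y ^ 2} := by
    rw [edwardsCard, Nat.card_eq_fintype_card,
      Fintype.card_congr (Equiv.subtypeProdEquivSigmaSubtype
        (fun x y : ZMod p => x ^ 2 + y ^ 2 = 1 + d * x ^ 2 * y ^ 2))]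
    exact Fintype.card_sigma
  have fib : ∀ x : ZMod p,
      (Fintype.card {y : ZMod p // x ^ 2 + y ^ 2 = 1 + d * x ^ 2 * y ^ 2} : ℤ)
        = 1 + quadraticChar (ZMod p) ((1 - x ^ 2) * (1 - d * x ^ 2))
          - (if 1 - d * x ^ 2 = 0 then 1 else 0) := by
    intro x
    by_cases hu : 1 - d * x ^ 2 = 0
    · have hb : (1 : ZMod p) - x ^ 2 ≠ 0 := by
        intro hb
        apply hd1
        have hx2 : x ^ 2 = 1 := by linear_combination -hb
        linear_combination -hu - d * hx2
      have hempty : IsEmpty {y : ZMod p // x ^ 2 + y ^ 2 = 1 + d * x ^ 2 * y ^ 2} := by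
        refine ⟨fun z => ?_⟩
        obtain ⟨y, hy⟩ := z
        exact hb (by linear_combination y ^ 2 * hu - hy)
      rw [Fintype.card_eq_zero]
      have hg : ((1 : ZMod p) - x ^ 2) * (1 - d * x ^ 2) = 0 := by rw [hu, mul_zero]
      rw [hg, if_pos hu]
      simp
    · have hiff : ∀ y : ZMod p,
          (x ^ 2 + y ^ 2 = 1 + d * x ^ 2 * y ^ 2)
            ↔ y ^ 2 = (1 - x ^ 2) * (1 - d * x ^ 2)⁻¹ := by
        intro y
        rw [eq_mul_inv_iff_mul_eq₀ hu]
        constructor <;> intro h <;> linear_combination h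
      rw [Fintype.card_congr (Equiv.subtypeEquivRight hiff), sqrt_count hp2]
      have hval : quadraticChar (ZMod p) ((1 - x ^ 2) * (1 - d * x ^ 2)⁻¹)
          = quadraticChar (ZMod p) ((1 - x ^ 2) * (1 - d * x ^ 2)) := by
        have hrw : ((1 : ZMod p) - x ^ 2) * (1 - d * x ^ 2)⁻¹
            = ((1 - x ^ 2) * (1 - d * x ^ 2)) * ((1 - d * x ^ 2)⁻¹) ^ 2 := by
          field_simp
        rw [hrw, map_mul, quadraticChar_sq_one' (inv_ne_zero hu), mul_one]
      rw [hval, if_neg hu]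
      ring
  have hind : (∑ x : ZMod p, if 1 - d * x ^ 2 = 0 then (1 : ℤ) else 0)
      = quadraticChar (ZMod p) d + 1 := by
    have hcond : ∀ x : ZMod p, (1 - d * x ^ 2 = 0) ↔ x ^ 2 = d⁻¹ := by
      intro x
      constructor
      · intro h
        have hdx : d * x ^ 2 = 1 := by linear_combination -h
        calc x ^ 2 = d⁻¹ * (d * x ^ 2) := by rw [← mul_assoc, inv_mul_cancel₀ hd0, one_mul]
          _ = d⁻¹ := by rw [hdx, mul_one]
      · intro h
        rw [h, mul_inv_cancel₀ hd0, sub_self]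
    rw [Finset.sum_boole]
    have hfilt : (univ.filter fun x : ZMod p => 1 - d * x ^ 2 = 0)
        = (univ.filter fun x : ZMod p => x ^ 2 = d⁻¹) :=
      Finset.filter_congr fun x _ => by rw [hcond x]
    rw [hfilt, ← Fintype.card_subtype, ← quadChar_inv d hd0]
    exact_mod_cast sqrt_count hp2 d⁻¹
  calc (edwardsCard p d : ℤ)
      = ∑ x : ZMod p,
          (Fintype.card {y : ZMod p // x ^ 2 + y ^ 2 = 1 + d * x ^ 2 * y ^ 2} : ℤ) := by
        rw [hcard]; push_cast; rfl
    _ = ∑ x : ZMod p,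
          (1 + (quadraticChar (ZMod p) ((1 - x ^ 2) * (1 - d * x ^ 2)) : ℤ)
            - (if 1 - d * x ^ 2 = 0 then 1 else 0)) :=
        Finset.sum_congr rfl fun x _ => fib x
    _ = p + (∑ x : ZMod p, (quadraticChar (ZMod p) ((1 - x ^ 2) * (1 - d * x ^ 2)) : ℤ))
        - (1 + quadraticChar (ZMod p) d) := by
        rw [Finset.sum_sub_distrib, Finset.sum_add_distrib, hind,
          Finset.sum_const, Finset.card_univ, ZMod.card]
        simp only [nsmul_eq_mul, mul_one]
        ring

private lemma bound_lemma (hp2 : p ≠ 2) (d : ZMod p) :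
    |∑ x : ZMod p, (quadraticChar (ZMod p) ((1 - x ^ 2) * (1 - d * x ^ 2)) : ℤ)|
      ≤ (p : ℤ) - 2 := by
  classical
  have habs : ∀ a : ZMod p, |(quadraticChar (ZMod p) a : ℤ)| ≤ 1 := by
    intro a
    by_cases h : a = 0
    · simp [h]
    · rcases quadraticChar_dichotomy h with h' | h' <;> simp [h']
  have hne : (-1 : ZMod p) ≠ 1 := by
    intro h
    have h2 : ((2 : ℕ) : ZMod p) = 0 := by push_cast; linear_combination -h
    have h3 : p ∣ 2 := (ZMod.natCast_eq_zero_iff _ _).mp h2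
    exact hp2 ((Nat.prime_dvd_prime_iff_eq hpp.out Nat.prime_two).mp h3)
  set f : ZMod p → ℤ :=
    fun x => (quadraticChar (ZMod p) ((1 - x ^ 2) * (1 - d * x ^ 2)) : ℤ) with hf
  set s : Finset (ZMod p) := (univ.erase 1).erase (-1) with hs
  have hsub : ∑ x : ZMod p, f x = ∑ x ∈ s, f x := by
    refine (Finset.sum_subset (Finset.subset_univ s) fun x _ hx => ?_).symm
    have hx1 : x = -1 ∨ x = 1 := by
      by_contra hc
      push_neg at hc
      exact hx (mem_erase.mpr ⟨hc.1, mem_erase.mpr ⟨hc.2, mem_univ x⟩⟩)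
    have hzero : ((1 : ZMod p) - x ^ 2) * (1 - d * x ^ 2) = 0 := by
      rcases hx1 with rfl | rfl <;> norm_num
    rw [hf]
    simp only [hzero, MulChar.map_zero, Int.cast_zero]
  rw [hsub]
  have hcard : s.card = p - 2 := by
    rw [hs, Finset.card_erase_of_mem
      (mem_erase.mpr ⟨hne, mem_univ _⟩), Finset.card_erase_of_mem (mem_univ _),
      Finset.card_univ, ZMod.card]
    omega
  have h2p : 2 ≤ p := hpp.out.two_le
  calc |∑ x ∈ s, f x| ≤ ∑ x ∈ s, |f x| := Finset.abs_sum_le_sum_abs _ _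
    _ ≤ s.card • (1 : ℤ) := Finset.sum_le_card_nsmul _ _ _ fun x _ => habs _
    _ = (s.card : ℤ) := by simp
    _ ≤ (p : ℤ) - 2 := by rw [hcard]; omega

end Aux

theorem stmt0 (p : ℕ) [Fact p.Prime] (hp : p % 4 = 3) (d : ZMod p)
    (hd0 : d ≠ 0) (hd1 : d ≠ 1)
    (hss : ∑ j ∈ range ((p - 1) / 2 + 1),
      (((p - 1) / 2).choose j : ZMod p) ^ 2 * d ^ j = 0) :
    (legendreSym p (d.val : ℤ) = -1 → edwardsCard p d = p + 1) ∧
    (legendreSym p (d.val : ℤ) = 1 → edwardsCard p d = p - 3) := by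
  have hpodd : p % 2 = 1 := by omega
  have hp2 : p ≠ 2 := by omega
  have hp3 : 3 ≤ p := by omega
  have hF : ringChar (ZMod p) ≠ 2 := ringChar_ne_two hp2
  have hm : (p - 1) / 2 = p / 2 := by omega
  rw [hm] at hss
  have hkey := key_sum hpodd d hss
  set S : ℤ := ∑ x : ZMod p, (quadraticChar (ZMod p) ((1 - x ^ 2) * (1 - d * x ^ 2)) : ℤ)
    with hS
  have hcnt := count_lemma hp2 d hd0 hd1
  have hbnd := bound_lemma hp2 d
  rw [← hS] at hbnd
  have hleg : legendreSym p (d.val : ℤ) = quadraticChar (ZMod p) d := by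
    unfold legendreSym
    congr 1
    have h1 : ((d.val : ℤ) : ZMod p) = ((d.val : ℕ) : ZMod p) := by push_cast; rfl
    rw [h1, ZMod.natCast_val, ZMod.cast_id]
  have hcong : ((S + quadraticChar (ZMod p) d : ℤ) : ZMod p) = 0 := by
    push_cast [hS]
    have hterm : ∀ x : ZMod p,
        ((quadraticChar (ZMod p) ((1 - x ^ 2) * (1 - d * x ^ 2)) : ℤ) : ZMod p)
          = ((1 - x ^ 2) * (1 - d * x ^ 2)) ^ (p / 2) := fun x => by
      rw [quadraticChar_eq_pow_of_char_ne_two' hF, ZMod.card]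
    have hchi : ((quadraticChar (ZMod p) d : ℤ) : ZMod p) = d ^ (p / 2) := by
      rw [quadraticChar_eq_pow_of_char_ne_two' hF, ZMod.card]
    rw [Finset.sum_congr rfl fun x _ => hterm x, hkey, hchi]
    ring
  have hdvd : (p : ℤ) ∣ S + quadraticChar (ZMod p) d :=
    (ZMod.intCast_zmod_eq_zero_iff_dvd _ p).mp hcong
  have habs1 : |(quadraticChar (ZMod p) d : ℤ)| ≤ 1 := by
    rcases quadraticChar_dichotomy hd0 with h | h <;> simp [h]
  have hzero : S + quadraticChar (ZMod p) d = 0 := by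
    refine Int.eq_zero_of_abs_lt_dvd hdvd ?_
    calc |S + (quadraticChar (ZMod p) d : ℤ)|
        ≤ |S| + |(quadraticChar (ZMod p) d : ℤ)| := abs_add_le _ _
      _ < p := by omega
  constructor
  · intro hleg1
    have hq : quadraticChar (ZMod p) d = -1 := by rw [← hleg]; exact hleg1
    rw [hq] at hzero hcnt
    omega
  · intro hleg1
    have hq : quadraticChar (ZMod p) d = 1 := by rw [← hleg]; exact hleg1
    rw [hq] at hzero hcnt
    omega
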